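/- Let φ : (0,δ] → (0,∞) be continuous strictly increasing with φ(t)→0 as t→0⁺, and v : [-1,1] → ℝ even convex with v(0)=0 and v(φ(t)) = o(t·φ(t)) as t→0⁺. Let g(x)=max(1/2-|x|,0) and v_t=v+t·g. Then for the convex envelope (v_t)** on [-1,1], liminf_{t→0⁺} (v_t(0) - (v_t)**(0)) / (t·φ(t)) ≥ 1. -/
import Mathlib


open Set Filter

/-- The convex envelope of `f` on `s ⊆ ℝ`: the pointwise supremum of all convex
functions on `s` lying below `f` on `s` (the largest convex minorant). -/
noncomputable def convEnv (s : Set ℝ) (f : ℝ → ℝ) (x : ℝ) : ℝ :=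
  sSup {c | ∃ w : ℝ → ℝ, ConvexOn ℝ s w ∧ (∀ y ∈ s, w y ≤ f y) ∧ c = w x}

theorem stmt8 (δ : ℝ) (hδ : 0 < δ) (φ : ℝ → ℝ)
    (hφc : ContinuousOn φ (Ioc 0 δ)) (hφmono : StrictMonoOn φ (Ioc 0 δ))
    (hφpos : ∀ t ∈ Ioc 0 δ, 0 < φ t)
    (hφ0 : Tendsto φ (nhdsWithin 0 (Ioi 0)) (nhds 0))
    (v : ℝ → ℝ) (hveven : ∀ x, v (-x) = v x)
    (hvconv : ConvexOn ℝ (Icc (-1) 1) v) (hv0 : v 0 = 0)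
    (hvo : (fun t => v (φ t)) =o[nhdsWithin 0 (Ioi 0)] fun t => t * φ t)
    (g : ℝ → ℝ) (hg : ∀ x, g x = max (1/2 - |x|) 0) :
    (1 : EReal) ≤ liminf (fun t =>
      (((v 0 + t * g 0 - convEnv (Icc (-1) 1) (fun x => v x + t * g x) 0)
        / (t * φ t) : ℝ) : EReal)) (nhdsWithin 0 (Ioi 0)) := by
  set l := nhdsWithin (0:ℝ) (Ioi 0) with hl
  have hvnn : ∀ y ∈ Icc (-1:ℝ) 1, 0 ≤ v y := by
    intro y hy
    have hy' : -y ∈ Icc (-1:ℝ) 1 := ⟨by linarith [hy.2], by linarith [hy.1]⟩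
    have h := hvconv.2 hy hy' (by norm_num : (0:ℝ) ≤ 1/2) (by norm_num : (0:ℝ) ≤ 1/2)
      (by norm_num)
    simp only [smul_eq_mul] at h
    have h0 : (1/2:ℝ) * y + 1/2 * (-y) = 0 := by ring
    rw [h0, hv0, hveven] at h
    linarith
  have hgnn : ∀ x, 0 ≤ g x := fun x => by rw [hg]; exact le_max_right _ _
  have hgeven : ∀ x, g (-x) = g x := fun x => by rw [hg, hg, abs_neg]
  have hdiv : Tendsto (fun t => v (φ t) / (t * φ t)) l (nhds 0) :=
    hvo.tendsto_div_nhds_zero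
  have h1 : Tendsto (fun t => ((1 - v (φ t) / (t * φ t) : ℝ) : EReal)) l
      (nhds (1:EReal)) := by
    have h1' : Tendsto (fun t => (1 - v (φ t) / (t * φ t) : ℝ)) l (nhds 1) := by
      have := hdiv.const_sub 1
      simpa using this
    have : ((1:ℝ) : EReal) = (1:EReal) := by norm_num
    rw [← this]
    exact EReal.tendsto_coe.mpr h1'
  rw [← h1.liminf_eq]
  refine liminf_le_liminf ?_
  have hmem : Ioc (0:ℝ) δ ∈ l := Ioc_mem_nhdsGT_of_mem ⟨le_refl 0, hδ⟩
  have hsmall : ∀ᶠ t in l, φ t < 1/2 := hφ0.eventually (gt_mem_nhds (by norm_num))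
  filter_upwards [hmem, hsmall] with t ht hts
  have ht0 : 0 < t := ht.1
  have hφt : 0 < φ t := hφpos t ht
  have hφmem : φ t ∈ Icc (-1:ℝ) 1 := ⟨by linarith, by linarith⟩
  have hφmem' : -φ t ∈ Icc (-1:ℝ) 1 := ⟨by linarith, by linarith⟩
  set vt := fun x => v x + t * g x with hvt
  have hvtnn : 0 ≤ vt (φ t) :=
    add_nonneg (hvnn _ hφmem) (mul_nonneg ht0.le (hgnn _))
  have henv : convEnv (Icc (-1) 1) vt 0 ≤ vt (φ t) := by
    apply Real.sSup_le _ hvtnn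
    rintro c ⟨w, hwconv, hwle, rfl⟩
    have h := hwconv.2 hφmem hφmem' (by norm_num : (0:ℝ) ≤ 1/2)
      (by norm_num : (0:ℝ) ≤ 1/2) (by norm_num)
    simp only [smul_eq_mul] at h
    have h0 : (1/2:ℝ) * φ t + 1/2 * (-φ t) = 0 := by ring
    rw [h0] at h
    have hw1 : w (φ t) ≤ vt (φ t) := hwle _ hφmem
    have hw2 : w (-φ t) ≤ vt (-φ t) := hwle _ hφmem'
    have hvteq : vt (-φ t) = vt (φ t) := by simp only [hvt, hveven, hgeven]
    linarith
  have hg0 : g 0 = 1/2 := by rw [hg]; norm_num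
  have hgφ : g (φ t) = 1/2 - φ t := by
    rw [hg, abs_of_pos hφt]; exact max_eq_left (by linarith)
  have hnum : t * φ t - v (φ t) ≤ v 0 + t * g 0 - convEnv (Icc (-1) 1) vt 0 := by
    have hv2 : vt (φ t) = v (φ t) + t * (1/2) - t * φ t := by
      simp only [hvt, hgφ]; ring
    have henv2 : convEnv (Icc (-1) 1) vt 0 ≤ v (φ t) + t * (1/2) - t * φ t :=
      hv2 ▸ henv
    rw [hv0, hg0]
    linarith [henv2]
  have htφ : 0 < t * φ t := mul_pos ht0 hφt
  have hratio : (1 - v (φ t) / (t * φ t) : ℝ)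
      ≤ (v 0 + t * g 0 - convEnv (Icc (-1) 1) vt 0) / (t * φ t) := by
    have heq : (1 - v (φ t) / (t * φ t) : ℝ) = (t * φ t - v (φ t)) / (t * φ t) := by
      field_simp
    rw [heq]
    exact div_le_div_of_nonneg_right hnum htφ.le
  exact_mod_cast hratio
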